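/- In the DEIM greedy algorithm, if PᵀΞ_{j-1} ∈ ℝ^{(j-1)×(j-1)} is invertible and the new index γ_j satisfies (ξ_j − Ξ_{j-1}c)(γ_j) ≠ 0 where c = (PᵀΞ_{j-1})⁻¹Pᵀξ_j, then the augmented matrix P̂ᵀΞ_j ∈ ℝ^{j×j}, with P̂ = [P, e_{γ_j}] and Ξ_j = [Ξ_{j-1}, ξ_j], is also invertible. -/
import Mathlib


open Matrix

lemma sum_indicator_mul {n : ℕ} (a : Fin n) (f : Fin n → ℝ) :
    ∑ i : Fin n, (if i = a then (1 : ℝ) else 0) * f i = f a := by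
  simp [ite_mul, Finset.sum_ite_eq']

/-- DEIM well-posedness induction step: if `Pᵀ Ξ` is invertible and the
residual of the new basis vector `ξ` at the new index `γj` is nonzero
(`(ξ − Ξ c)(γj) ≠ 0` with `c = (Pᵀ Ξ)⁻¹ Pᵀ ξ`), then the augmented matrix
`P̂ᵀ Ξ̂` with `P̂ = [P, e_{γj}]` and `Ξ̂ = [Ξ, ξ]` is also invertible. -/
theorem deim_inductive_invertibility
    (n k : ℕ) (Ξ : Matrix (Fin n) (Fin k) ℝ) (ξ : Fin n → ℝ)
    (γ : Fin k → Fin n)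
    (P : Matrix (Fin n) (Fin k) ℝ)
    (hP : P = Matrix.of fun i j => if i = γ j then (1 : ℝ) else 0)
    (hinv : IsUnit (Pᵀ * Ξ).det)
    (c : Fin k → ℝ) (hc : c = (Pᵀ * Ξ)⁻¹ *ᵥ (Pᵀ *ᵥ ξ))
    (γj : Fin n) (hres : (ξ - Ξ *ᵥ c) γj ≠ 0)
    (Phat : Matrix (Fin n) (Fin (k + 1)) ℝ)
    (hPhat : Phat = Matrix.of fun i j =>
      if i = Fin.snoc γ γj j then (1 : ℝ) else 0)
    (Ξhat : Matrix (Fin n) (Fin (k + 1)) ℝ)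
    (hΞhat : Ξhat = Matrix.of fun i j => Fin.snoc (Ξ i) (ξ i) j) :
    IsUnit (Phatᵀ * Ξhat).det := by
  set A : Matrix (Fin k) (Fin k) ℝ := Pᵀ * Ξ with hA
  set B : Matrix (Fin k) (Fin 1) ℝ := Matrix.of fun p _ => ξ (γ p) with hB
  set C : Matrix (Fin 1) (Fin k) ℝ := Matrix.of fun _ q => Ξ γj q with hC
  set D : Matrix (Fin 1) (Fin 1) ℝ := Matrix.of fun _ _ => ξ γj with hD
  have hAentry : ∀ p q, A p q = Ξ (γ p) q := by
    intro p q
    simp only [hA, Matrix.mul_apply, Matrix.transpose_apply, hP, Matrix.of_apply]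
    exact sum_indicator_mul (γ p) (fun i => Ξ i q)
  have hMentry : ∀ p q, (Phatᵀ * Ξhat) p q
      = Fin.snoc (α := fun _ => ℝ) (Ξ (Fin.snoc (α := fun _ => Fin n) γ γj p)) (ξ (Fin.snoc (α := fun _ => Fin n) γ γj p)) q := by
    intro p q
    simp only [Matrix.mul_apply, Matrix.transpose_apply, hPhat, hΞhat, Matrix.of_apply]
    exact sum_indicator_mul (Fin.snoc (α := fun _ => Fin n) γ γj p)
      (fun i => Fin.snoc (α := fun _ => ℝ) (Ξ i) (ξ i) q)
  -- relate to block matrix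
  let e : Fin k ⊕ Fin 1 ≃ Fin (k + 1) := finSumFinEquiv
  have hsub : (Phatᵀ * Ξhat).submatrix e e = Matrix.fromBlocks A B C D := by
    ext p q
    rcases p with p | p <;> rcases q with q | q <;>
      simp only [Matrix.submatrix_apply, e, finSumFinEquiv_apply_left,
        finSumFinEquiv_apply_right, hMentry, Matrix.fromBlocks_apply₁₁,
        Matrix.fromBlocks_apply₁₂, Matrix.fromBlocks_apply₂₁,
        Matrix.fromBlocks_apply₂₂]
    · rw [show Fin.castAdd 1 p = Fin.castSucc p from rfl,
        show Fin.castAdd 1 q = Fin.castSucc q from rfl,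
        Fin.snoc_castSucc, Fin.snoc_castSucc, hAentry]
    · rw [show Fin.castAdd 1 p = Fin.castSucc p from rfl,
        show Fin.natAdd k q = Fin.last k from (by simp [Fin.ext_iff, Fin.eq_zero q]),
        Fin.snoc_castSucc, Fin.snoc_last]
      rfl
    · rw [show Fin.natAdd k p = Fin.last k from (by simp [Fin.ext_iff, Fin.eq_zero p]),
        show Fin.castAdd 1 q = Fin.castSucc q from rfl,
        Fin.snoc_last, Fin.snoc_castSucc]
      rfl
    · rw [show Fin.natAdd k p = Fin.last k from (by simp [Fin.ext_iff, Fin.eq_zero p]),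
        show Fin.natAdd k q = Fin.last k from (by simp [Fin.ext_iff, Fin.eq_zero q]),
        Fin.snoc_last, Fin.snoc_last]
      rfl
  have hdet : (Phatᵀ * Ξhat).det = (Matrix.fromBlocks A B C D).det := by
    rw [← hsub, Matrix.det_submatrix_equiv_self]
  have : Invertible A := A.invertibleOfIsUnitDet hinv
  have hblock := Matrix.det_fromBlocks₁₁ A B C D
  have hinvOf : (⅟A : Matrix (Fin k) (Fin k) ℝ) = A⁻¹ := Matrix.invOf_eq_nonsing_inv A
  have hPξ : ∀ r, (Pᵀ *ᵥ ξ) r = ξ (γ r) := by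
    intro r
    simp only [Matrix.mulVec, dotProduct, Matrix.transpose_apply, hP,
      Matrix.of_apply]
    exact sum_indicator_mul (γ r) ξ
  have hcB : ∀ q, c q = (A⁻¹ * B) q 0 := by
    intro q
    rw [hc, funext hPξ]
    simp only [Matrix.mulVec, dotProduct, Matrix.mul_apply, hB, Matrix.of_apply]
  have hres' : (D - C * ⅟A * B) 0 0 = (ξ - Ξ *ᵥ c) γj := by
    rw [hinvOf]
    simp only [Matrix.sub_apply, hD, Matrix.of_apply, Pi.sub_apply]
    congr 1
    rw [Matrix.mul_assoc, Matrix.mul_apply, Matrix.mulVec]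
    simp only [dotProduct, hC, Matrix.of_apply]
    exact Finset.sum_congr rfl fun q _ => by rw [hcB q]
  rw [hdet, hblock]
  refine hinv.mul ?_
  rw [Matrix.det_fin_one, hres']
  exact isUnit_iff_ne_zero.mpr hres
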